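/- Let l be an odd prime number, n ≥ 1, and let g ∈ GL_n(ℤ_l) be congruent to the identity matrix modulo l. Then the subgroup of ℚ̄_l^× generated by the eigenvalues of g (in a fixed algebraic closure ℚ̄_l of ℚ_l) contains no root of unity other than 1, i.e. it is torsion-free. In particular, the first congruence kernel K_l^{(1)} = ker(GL_n(ℤ_l) → GL_n(ℤ/lℤ)) is a neat subgroup of GL_n(ℚ_l). -/

import Mathlib

open Polynomial

/-- The subgroup `Eig_l(g)` of `ℚ̄_l^×` generated by the eigenvalues (in a fixed
algebraic closure `ℚ̄_l` of `ℚ_l`) of a matrix `g` with coefficients in `ℚ_l`, i.e. by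
the units of `ℚ̄_l` that are roots of the characteristic polynomial of `g`. -/
noncomputable def eigenvalueGroup (l : ℕ) [Fact l.Prime] (n : ℕ)
    (g : Matrix (Fin n) (Fin n) ℚ_[l]) : Subgroup (AlgebraicClosure ℚ_[l])ˣ :=
  Subgroup.closure
    {x : (AlgebraicClosure ℚ_[l])ˣ |
      (g.charpoly.map (algebraMap ℚ_[l] (AlgebraicClosure ℚ_[l]))).IsRoot
        (x : AlgebraicClosure ℚ_[l])}

/-- The natural map `GL_n(ℤ_l) → GL_n(ℚ_l)` induced by the inclusion `ℤ_l → ℚ_l`. -/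
noncomputable def glMapToPadic (l : ℕ) [Fact l.Prime] (n : ℕ)
    (g : (Matrix (Fin n) (Fin n) ℤ_[l])ˣ) : (Matrix (Fin n) (Fin n) ℚ_[l])ˣ :=
  Units.map (RingHom.mapMatrix (algebraMap ℤ_[l] ℚ_[l])).toMonoidHom g

/-- An element `g` of `GL_n(ℚ_l)` is *neat* (with respect to a fixed embedding
`ι : ℚ̄ → ℚ̄_l`) if the torsion subgroup of `ℚ̄^× ∩ Eig_l(g)` is trivial. -/
def IsNeatElem (l : ℕ) [Fact l.Prime] (n : ℕ)
    (ι : AlgebraicClosure ℚ →+* AlgebraicClosure ℚ_[l])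
    (g : (Matrix (Fin n) (Fin n) ℚ_[l])ˣ) : Prop :=
  ∀ x : (AlgebraicClosure ℚ)ˣ, IsOfFinOrder x →
    x ∈ (eigenvalueGroup l n (g : Matrix (Fin n) (Fin n) ℚ_[l])).comap
      (Units.map ι.toMonoidHom) → x = 1

/-- The first congruence kernel `K_l^{(1)} = ker (GL_n(ℤ_l) → GL_n(ℤ/lℤ))`. -/
noncomputable def firstCongruenceKernel (l : ℕ) [Fact l.Prime] (n : ℕ) :
    Subgroup (Matrix (Fin n) (Fin n) ℤ_[l])ˣ :=
  (Units.map (RingHom.mapMatrix (PadicInt.toZMod (p := l))).toMonoidHom).ker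

lemma my_eval_charpoly {R : Type*} [CommRing R] {m : ℕ} (M : Matrix (Fin m) (Fin m) R) (t : R) :
    M.charpoly.eval t = (t • (1 : Matrix (Fin m) (Fin m) R) - M).det := by
  rw [Matrix.charpoly, ← Polynomial.coe_evalRingHom, RingHom.map_det]
  congr 1
  ext i j
  by_cases h : i = j
  · subst h
    simp [Matrix.charmatrix_apply_eq, Matrix.one_apply, Matrix.smul_apply, Matrix.sub_apply]
  · simp [Matrix.charmatrix_apply_ne _ _ _ h, Matrix.one_apply, h, Matrix.smul_apply,
      Matrix.sub_apply]

lemma root_charpoly_iff {K : Type*} [Field K] {m : ℕ} (M : Matrix (Fin m) (Fin m) K) (t : K) :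
    M.charpoly.eval t = 0 ↔ ∃ v, v ≠ 0 ∧ M.mulVec v = t • v := by
  rw [my_eval_charpoly, ← Matrix.exists_mulVec_eq_zero_iff]
  constructor
  · rintro ⟨v, hv, h⟩
    refine ⟨v, hv, ?_⟩
    rw [Matrix.sub_mulVec, Matrix.smul_mulVec, Matrix.one_mulVec, sub_eq_zero] at h
    exact h.symm
  · rintro ⟨v, hv, h⟩
    refine ⟨v, hv, ?_⟩
    rw [Matrix.sub_mulVec, Matrix.smul_mulVec, Matrix.one_mulVec, sub_eq_zero, h]

lemma eig_step {l : ℕ} [Fact l.Prime] {n : ℕ} (G : (Matrix (Fin n) (Fin n) ℤ_[l])ˣ)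
    (hG : ∀ i j, (l : ℤ_[l]) ∣
      ((G : Matrix (Fin n) (Fin n) ℤ_[l]) i j - (1 : Matrix (Fin n) (Fin n) ℤ_[l]) i j))
    (t : AlgebraicClosure ℚ_[l])
    (ht : (((G : Matrix (Fin n) (Fin n) ℤ_[l])).map
        (algebraMap ℤ_[l] (AlgebraicClosure ℚ_[l]))).charpoly.eval t = 0) :
    t ≠ 0 ∧ (∃ a ∈ integralClosure ℤ_[l] (AlgebraicClosure ℚ_[l]), t = 1 + l * a) ∧
      ((((G⁻¹ : (Matrix (Fin n) (Fin n) ℤ_[l])ˣ) : Matrix (Fin n) (Fin n) ℤ_[l])).map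
        (algebraMap ℤ_[l] (AlgebraicClosure ℚ_[l]))).charpoly.eval t⁻¹ = 0 := by
  set φ := algebraMap ℤ_[l] (AlgebraicClosure ℚ_[l]) with hφ
  set B := ((G : Matrix (Fin n) (Fin n) ℤ_[l])).map φ with hB
  set B' := (((G⁻¹ : (Matrix (Fin n) (Fin n) ℤ_[l])ˣ) : Matrix (Fin n) (Fin n) ℤ_[l])).map φ
    with hB'
  have hl0 : ((l : AlgebraicClosure ℚ_[l])) ≠ 0 :=
    Nat.cast_ne_zero.mpr (Fact.out : l.Prime).ne_zero
  have hBB' : B' * B = 1 := by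
    rw [hB, hB', ← Matrix.map_mul]
    have : ((G⁻¹ : (Matrix (Fin n) (Fin n) ℤ_[l])ˣ) : Matrix (Fin n) (Fin n) ℤ_[l])
        * (G : Matrix (Fin n) (Fin n) ℤ_[l]) = 1 := Units.inv_mul G
    rw [this, Matrix.map_one φ (map_zero φ) (map_one φ)]
  obtain ⟨v, hv0, hv⟩ := (root_charpoly_iff _ t).mp ht
  have ht0 : t ≠ 0 := by
    rintro rfl
    apply hv0
    rw [zero_smul] at hv
    have h1 : B'.mulVec (B.mulVec v) = v := by rw [Matrix.mulVec_mulVec, hBB', Matrix.one_mulVec]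
    rw [hv, Matrix.mulVec_zero] at h1
    exact h1.symm
  have key : ∀ (K : (Matrix (Fin n) (Fin n) ℤ_[l])ˣ), (∀ i j, (l : ℤ_[l]) ∣
      ((K : Matrix (Fin n) (Fin n) ℤ_[l]) i j - (1 : Matrix (Fin n) (Fin n) ℤ_[l]) i j)) →
      ∀ s : AlgebraicClosure ℚ_[l],
      (((K : Matrix (Fin n) (Fin n) ℤ_[l])).map φ).charpoly.eval s = 0 →
      ∃ a ∈ integralClosure ℤ_[l] (AlgebraicClosure ℚ_[l]), s = 1 + l * a := by
    intro K hK s hs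
    obtain ⟨w, hw0, hw⟩ := (root_charpoly_iff _ s).mp hs
    classical
    set H : Matrix (Fin n) (Fin n) ℤ_[l] := Matrix.of fun i j => (hK i j).choose with hH
    have hHspec : ∀ i j, ((K : Matrix (Fin n) (Fin n) ℤ_[l]) i j
        - (1 : Matrix (Fin n) (Fin n) ℤ_[l]) i j) = l * H i j := fun i j => (hK i j).choose_spec
    have hKmat : ((K : Matrix (Fin n) (Fin n) ℤ_[l])).map φ
        = 1 + (l : AlgebraicClosure ℚ_[l]) • (H.map φ) := by
      ext i j
      have h2 : (K : Matrix (Fin n) (Fin n) ℤ_[l]) i j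
          = (1 : Matrix (Fin n) (Fin n) ℤ_[l]) i j + l * H i j := by
        linear_combination hHspec i j
      simp only [Matrix.map_apply, Matrix.add_apply, Matrix.smul_apply, h2, map_add, map_mul,
        map_natCast, smul_eq_mul]
      congr 1
      by_cases hij : i = j <;> simp [hij, Matrix.one_apply]
    set μ : AlgebraicClosure ℚ_[l] := (s - 1) / l with hμ
    have hHw : (H.map φ).mulVec w = μ • w := by
      rw [hKmat] at hw
      rw [Matrix.add_mulVec, Matrix.one_mulVec, Matrix.smul_mulVec] at hw
      funext i
      have h4 := congrFun hw i
      simp only [Pi.add_apply, Pi.smul_apply, smul_eq_mul] at h4 ⊢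
      rw [hμ]
      field_simp
      linear_combination h4
    have hroot : (H.map φ).charpoly.eval μ = 0 := (root_charpoly_iff _ μ).mpr ⟨w, hw0, hHw⟩
    have hint : IsIntegral ℤ_[l] μ := by
      refine ⟨H.charpoly, H.charpoly_monic, ?_⟩
      rw [← Polynomial.eval_map, ← hφ, ← Matrix.charpoly_map]
      exact hroot
    refine ⟨μ, hint, ?_⟩
    rw [hμ]
    field_simp
    ring
  have hGK := key G hG t ht
  have hB'v : B'.mulVec v = t⁻¹ • v := by
    have h1 : B'.mulVec (B.mulVec v) = v := by rw [Matrix.mulVec_mulVec, hBB', Matrix.one_mulVec]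
    rw [hv, Matrix.mulVec_smul] at h1
    funext i
    have h2 := congrFun h1 i
    simp only [Pi.smul_apply, smul_eq_mul] at h2 ⊢
    field_simp
    linear_combination h2
  have hrootinv : B'.charpoly.eval t⁻¹ = 0 := (root_charpoly_iff _ _).mpr ⟨v, hv0, hB'v⟩
  exact ⟨ht0, hGK, hrootinv⟩

/-- The subgroup of units `x` of `ℚ̄_l` with `x ≡ 1` and `x⁻¹ ≡ 1` modulo `l` over the
integral closure of `ℤ_l`. -/
def oneUnits (l : ℕ) [Fact l.Prime] : Subgroup (AlgebraicClosure ℚ_[l])ˣ where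
  carrier := {x | (∃ a ∈ integralClosure ℤ_[l] (AlgebraicClosure ℚ_[l]),
      (x : AlgebraicClosure ℚ_[l]) = 1 + l * a) ∧
    (∃ b ∈ integralClosure ℤ_[l] (AlgebraicClosure ℚ_[l]),
      ((x⁻¹ : (AlgebraicClosure ℚ_[l])ˣ) : AlgebraicClosure ℚ_[l]) = 1 + l * b)}
  one_mem' := ⟨⟨0, Subalgebra.zero_mem _, by simp⟩, ⟨0, Subalgebra.zero_mem _, by simp⟩⟩
  mul_mem' := by
    rintro x y ⟨⟨a, ha, hxa⟩, ⟨a', ha', hxa'⟩⟩ ⟨⟨b, hb, hyb⟩, ⟨b', hb', hyb'⟩⟩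
    have hlmem : ((l : AlgebraicClosure ℚ_[l])) ∈ integralClosure ℤ_[l] (AlgebraicClosure ℚ_[l]) :=
      Subalgebra.natCast_mem _ l
    constructor
    · refine ⟨a + b + l * (a * b), ?_, ?_⟩
      · exact Subalgebra.add_mem _ (Subalgebra.add_mem _ ha hb)
          (Subalgebra.mul_mem _ hlmem (Subalgebra.mul_mem _ ha hb))
      · push_cast
        rw [hxa, hyb]; ring
    · refine ⟨b' + a' + l * (b' * a'), ?_, ?_⟩
      · exact Subalgebra.add_mem _ (Subalgebra.add_mem _ hb' ha')
          (Subalgebra.mul_mem _ hlmem (Subalgebra.mul_mem _ hb' ha'))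
      · rw [mul_inv_rev, Units.val_mul, Units.val_inv_eq_inv_val, Units.val_inv_eq_inv_val,
          ← Units.val_inv_eq_inv_val x, ← Units.val_inv_eq_inv_val y, hyb', hxa']
        ring
  inv_mem' := by
    rintro x ⟨⟨a, ha, hxa⟩, ⟨a', ha', hxa'⟩⟩
    exact ⟨⟨a', ha', hxa'⟩, ⟨a, ha, by rwa [inv_inv]⟩⟩

lemma pow_expand {R : Type*} [CommRing R] (x : R) (p : ℕ) (hp : 2 ≤ p) :
    (1 + x) ^ p = 1 + p * x +
      x ^ 2 * ∑ k ∈ Finset.range (p - 1), x ^ k * (p.choose (k + 2) : R) := by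
  obtain ⟨m, rfl⟩ : ∃ m, p = m + 2 := ⟨p - 2, by omega⟩
  rw [add_comm (1 : R) x, add_pow]
  simp only [one_pow, mul_one]
  rw [Finset.sum_range_succ' _ (m + 2), Finset.sum_range_succ' _ (m + 1)]
  have : ∀ k, x ^ (k + 1 + 1) * ((m + 2).choose (k + 1 + 1) : R)
      = x ^ 2 * (x ^ k * ((m + 2).choose (k + 2) : R)) := by
    intro k
    ring_nf
  simp only [this]
  rw [← Finset.mul_sum]
  simp only [Nat.add_sub_cancel, Nat.choose_zero_right, pow_zero, pow_one]
  push_cast [Nat.choose_one_right]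
  ring

lemma not_int_div (l : ℕ) [hF : Fact l.Prime] (r : ℕ) (hr : ¬ l ∣ r)
    (t : AlgebraicClosure ℚ_[l]) (ht : t ∈ integralClosure ℤ_[l] (AlgebraicClosure ℚ_[l]))
    (h : (r : AlgebraicClosure ℚ_[l]) = (l : AlgebraicClosure ℚ_[l]) * t) : False := by
  have hl0 : ((l : AlgebraicClosure ℚ_[l])) ≠ 0 := Nat.cast_ne_zero.mpr hF.out.ne_zero
  have hl0' : ((l : ℚ_[l])) ≠ 0 := Nat.cast_ne_zero.mpr hF.out.ne_zero
  have key : t = algebraMap ℚ_[l] (AlgebraicClosure ℚ_[l]) ((r : ℚ_[l]) / (l : ℚ_[l])) := by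
    rw [map_div₀, map_natCast, map_natCast]
    field_simp
    linear_combination -h
  have hint : IsIntegral ℤ_[l] ((r : ℚ_[l]) / (l : ℚ_[l])) := by
    have ht' : IsIntegral ℤ_[l] t := ht
    rw [key] at ht'
    exact (isIntegral_algebraMap_iff
      (algebraMap ℚ_[l] (AlgebraicClosure ℚ_[l])).injective).mp ht'
  obtain ⟨y, hy⟩ := IsIntegrallyClosed.isIntegral_iff.mp hint
  have hnorm : ‖(r : ℚ_[l]) / (l : ℚ_[l])‖ ≤ 1 := by
    rw [← hy]
    exact PadicInt.norm_le_one y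
  have hrnorm : ‖(r : ℚ_[l])‖ = 1 := by
    refine le_antisymm (by exact_mod_cast Padic.norm_int_le_one (r : ℤ)) ?_
    by_contra hlt
    have h1 : ‖((r : ℤ) : ℚ_[l])‖ < 1 := by push_cast; exact lt_of_not_ge hlt
    rw [Padic.norm_intCast_lt_one_iff] at h1
    exact hr (by exact_mod_cast h1)
  rw [norm_div, hrnorm, Padic.norm_p] at hnorm
  have h2 : (1 : ℝ) < l := by exact_mod_cast hF.out.one_lt
  rw [one_div, inv_inv] at hnorm
  linarith

lemma torsion_oneUnits {l : ℕ} [hF : Fact l.Prime] (hl : l ≠ 2) (x : (AlgebraicClosure ℚ_[l])ˣ)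
    (hx : x ∈ oneUnits l) (hfin : IsOfFinOrder x) : x = 1 := by
  by_contra hx1
  set m := orderOf x with hm
  have hm0 : 0 < m := hfin.orderOf_pos
  have hm1 : m ≠ 1 := fun h => hx1 (orderOf_eq_one_iff.mp h)
  set p := m.minFac with hp
  have hpp : p.Prime := Nat.minFac_prime hm1
  set y := x ^ (m / p) with hy
  have hyp : y ^ p = 1 := by
    rw [hy, ← pow_mul, Nat.div_mul_cancel (Nat.minFac_dvd m)]
    exact pow_orderOf_eq_one x
  have hy1 : y ≠ 1 := by
    intro h
    have h1 : m ∣ m / p := orderOf_dvd_of_pow_eq_one (by rw [← hy, h])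
    have h2 : 0 < m / p := Nat.div_pos (Nat.minFac_le hm0) hpp.pos
    have h3 : m / p < m := Nat.div_lt_self hm0 hpp.one_lt
    exact absurd (Nat.le_of_dvd h2 h1) (by omega)
  have hymem : y ∈ oneUnits l := Subgroup.pow_mem _ hx _
  obtain ⟨⟨c, hc, hyc⟩, -⟩ := hymem
  have hc0 : c ≠ 0 := by
    intro h
    apply hy1
    apply Units.ext
    rw [hyc, h]
    simp
  have hl0 : ((l : AlgebraicClosure ℚ_[l])) ≠ 0 := Nat.cast_ne_zero.mpr hF.out.ne_zero
  have hpow : (1 + (l : AlgebraicClosure ℚ_[l]) * c) ^ p = 1 := by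
    rw [← hyc, ← Units.val_pow_eq_pow_val, hyp, Units.val_one]
  rw [pow_expand _ p hpp.two_le] at hpow
  set x0 := (l : AlgebraicClosure ℚ_[l]) * c with hx0def
  set d := ∑ k ∈ Finset.range (p - 1), x0 ^ k * (p.choose (k + 2) : AlgebraicClosure ℚ_[l])
    with hd
  have hx00 : x0 ≠ 0 := mul_ne_zero hl0 hc0
  have h1 : x0 * ((p : AlgebraicClosure ℚ_[l]) + x0 * d) = 0 := by linear_combination hpow
  have h2 : (p : AlgebraicClosure ℚ_[l]) + x0 * d = 0 :=
    (mul_eq_zero.mp h1).resolve_left hx00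
  have hlmem : ((l : AlgebraicClosure ℚ_[l])) ∈ integralClosure ℤ_[l] (AlgebraicClosure ℚ_[l]) :=
    Subalgebra.natCast_mem _ l
  have hx0mem : x0 ∈ integralClosure ℤ_[l] (AlgebraicClosure ℚ_[l]) :=
    Subalgebra.mul_mem _ hlmem hc
  have hdT : d ∈ integralClosure ℤ_[l] (AlgebraicClosure ℚ_[l]) :=
    Subalgebra.sum_mem _ fun k _ => Subalgebra.mul_mem _ (Subalgebra.pow_mem _ hx0mem k)
      (Subalgebra.natCast_mem _ _)
  by_cases hpl : p = l
  · -- p = l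
    rw [hpl] at h2
    have hcd : c * d = -1 := by
      have h4 : (l : AlgebraicClosure ℚ_[l]) * (1 + c * d) = 0 := by
        linear_combination h2
      have h5 : (1 : AlgebraicClosure ℚ_[l]) + c * d = 0 :=
        (mul_eq_zero.mp h4).resolve_left hl0
      linear_combination h5
    obtain ⟨m', hm'⟩ : ∃ m', l = m' + 3 := ⟨l - 3, by have := hF.out.two_le; omega⟩
    have hsum : ∑ k ∈ Finset.range (m' + 1),
        x0 ^ k * (l.choose (k + 2) : AlgebraicClosure ℚ_[l])
        = (l : AlgebraicClosure ℚ_[l]) * ∑ k ∈ Finset.range (m' + 1),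
          x0 ^ k * ((l.choose (k + 2) / l : ℕ) : AlgebraicClosure ℚ_[l]) := by
      rw [Finset.mul_sum]
      refine Finset.sum_congr rfl fun k hk => ?_
      have hk' : k < m' + 1 := Finset.mem_range.mp hk
      have hdvd : l ∣ l.choose (k + 2) :=
        Nat.Prime.dvd_choose_self hF.out (by omega) (by omega)
      have : (l.choose (k + 2) : AlgebraicClosure ℚ_[l])
          = (l : AlgebraicClosure ℚ_[l]) * ((l.choose (k + 2) / l : ℕ) :
            AlgebraicClosure ℚ_[l]) := by
        rw [← Nat.cast_mul, Nat.mul_div_cancel' hdvd]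
      rw [this]
      ring
    set e := (∑ k ∈ Finset.range (m' + 1),
        x0 ^ k * ((l.choose (k + 2) / l : ℕ) : AlgebraicClosure ℚ_[l]))
      + (l : AlgebraicClosure ℚ_[l]) ^ m' * c ^ (m' + 1) with he
    have hde : d = (l : AlgebraicClosure ℚ_[l]) * e := by
      rw [hd, hpl, show l - 1 = m' + 2 by omega, Finset.sum_range_succ, hsum,
        show m' + 1 + 2 = l by omega, Nat.choose_self, he, hx0def]
      push_cast
      ring
    have heT : e ∈ integralClosure ℤ_[l] (AlgebraicClosure ℚ_[l]) := by
      refine Subalgebra.add_mem _ (Subalgebra.sum_mem _ fun k _ => Subalgebra.mul_mem _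
        (Subalgebra.pow_mem _ hx0mem k) (Subalgebra.natCast_mem _ _)) ?_
      exact Subalgebra.mul_mem _ (Subalgebra.pow_mem _ hlmem m') (Subalgebra.pow_mem _ hc _)
    refine not_int_div l 1 (fun hdvd => ?_) (-(c * e))
      (Subalgebra.neg_mem _ (Subalgebra.mul_mem _ hc heT)) ?_
    · have := Nat.le_of_dvd one_pos hdvd
      have := hF.out.two_le
      omega
    · rw [hde] at hcd
      push_cast
      linear_combination hcd
  · -- p ≠ l
    refine not_int_div l p (fun hdvd => hpl ((Nat.prime_dvd_prime_iff_eq hF.out hpp).mp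
      hdvd).symm) (-(c * d)) (Subalgebra.neg_mem _ (Subalgebra.mul_mem _ hc hdT)) ?_
    rw [hx0def] at h2
    linear_combination h2

lemma main_aux (l : ℕ) [hF : Fact l.Prime] (hl : l ≠ 2) {n : ℕ}
    (G : (Matrix (Fin n) (Fin n) ℤ_[l])ˣ)
    (hG : ∀ i j, (l : ℤ_[l]) ∣
      ((G : Matrix (Fin n) (Fin n) ℤ_[l]) i j - (1 : Matrix (Fin n) (Fin n) ℤ_[l]) i j)) :
    ∀ x ∈ eigenvalueGroup l n ((glMapToPadic l n G : (Matrix (Fin n) (Fin n) ℚ_[l])ˣ) :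
        Matrix (Fin n) (Fin n) ℚ_[l]), IsOfFinOrder x → x = 1 := by
  have hG' : ∀ i j, (l : ℤ_[l]) ∣
      (((G⁻¹ : (Matrix (Fin n) (Fin n) ℤ_[l])ˣ) : Matrix (Fin n) (Fin n) ℤ_[l]) i j
        - (1 : Matrix (Fin n) (Fin n) ℤ_[l]) i j) := by
    intro i j
    have hmat : ((G⁻¹ : (Matrix (Fin n) (Fin n) ℤ_[l])ˣ) : Matrix (Fin n) (Fin n) ℤ_[l])
        - 1 = ((G⁻¹ : (Matrix (Fin n) (Fin n) ℤ_[l])ˣ) : Matrix (Fin n) (Fin n) ℤ_[l])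
          * (1 - (G : Matrix (Fin n) (Fin n) ℤ_[l])) := by
      rw [Matrix.mul_sub, Matrix.mul_one, Units.inv_mul]
    have h0 := congrFun (congrFun hmat i) j
    rw [Matrix.sub_apply] at h0
    rw [h0, Matrix.mul_apply]
    refine Finset.dvd_sum fun k _ => Dvd.dvd.mul_left ?_ _
    have : ((1 : Matrix (Fin n) (Fin n) ℤ_[l]) - (G : Matrix (Fin n) (Fin n) ℤ_[l])) k j
        = -((G : Matrix (Fin n) (Fin n) ℤ_[l]) k j - (1 : Matrix (Fin n) (Fin n) ℤ_[l]) k j) := by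
      rw [Matrix.sub_apply]; ring
    rw [this]
    exact dvd_neg.mpr (hG k j)
  have hcp : ((glMapToPadic l n G : (Matrix (Fin n) (Fin n) ℚ_[l])ˣ) :
        Matrix (Fin n) (Fin n) ℚ_[l]).charpoly.map (algebraMap ℚ_[l] (AlgebraicClosure ℚ_[l]))
      = (((G : Matrix (Fin n) (Fin n) ℤ_[l])).map
          (algebraMap ℤ_[l] (AlgebraicClosure ℚ_[l]))).charpoly := by
    have h1 : ((glMapToPadic l n G : (Matrix (Fin n) (Fin n) ℚ_[l])ˣ) :
        Matrix (Fin n) (Fin n) ℚ_[l])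
        = ((G : Matrix (Fin n) (Fin n) ℤ_[l])).map (algebraMap ℤ_[l] ℚ_[l]) := rfl
    rw [h1, Matrix.charpoly_map, Polynomial.map_map, ← IsScalarTower.algebraMap_eq,
      ← Matrix.charpoly_map]
  have hle : eigenvalueGroup l n ((glMapToPadic l n G : (Matrix (Fin n) (Fin n) ℚ_[l])ˣ) :
      Matrix (Fin n) (Fin n) ℚ_[l]) ≤ oneUnits l := by
    rw [eigenvalueGroup]
    refine (Subgroup.closure_le _).mpr ?_
    intro x hx
    have hroot : (((G : Matrix (Fin n) (Fin n) ℤ_[l])).map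
        (algebraMap ℤ_[l] (AlgebraicClosure ℚ_[l]))).charpoly.eval
          (x : AlgebraicClosure ℚ_[l]) = 0 := by
      rw [← hcp]
      exact hx
    obtain ⟨-, ha, hrootinv⟩ := eig_step G hG _ hroot
    obtain ⟨-, hb, -⟩ := eig_step G⁻¹ hG' _ hrootinv
    refine ⟨ha, ?_⟩
    rw [Units.val_inv_eq_inv_val]
    exact hb
  intro x hx hfin
  exact torsion_oneUnits hl x (hle hx) hfin

/-- Let `l` be an odd prime, `n ≥ 1`, and `g ∈ GL_n(ℤ_l)` congruent to the identity
matrix modulo `l`. Then the subgroup of `ℚ̄_l^×` generated by the eigenvalues of `g` is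
torsion-free (contains no root of unity other than `1`). In particular, the first
congruence kernel `K_l^{(1)} = ker(GL_n(ℤ_l) → GL_n(ℤ/lℤ))` is a neat subgroup of
`GL_n(ℚ_l)`. -/
theorem stmt_3 (l : ℕ) [Fact l.Prime] (hl : l ≠ 2) (n : ℕ) (hn : 1 ≤ n)
    (ι : AlgebraicClosure ℚ →+* AlgebraicClosure ℚ_[l])
    (g : (Matrix (Fin n) (Fin n) ℤ_[l])ˣ)
    (hg : ∀ i j, (l : ℤ_[l]) ∣
      ((g : Matrix (Fin n) (Fin n) ℤ_[l]) i j - (1 : Matrix (Fin n) (Fin n) ℤ_[l]) i j)) :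
    (∀ x ∈ eigenvalueGroup l n ((glMapToPadic l n g : (Matrix (Fin n) (Fin n) ℚ_[l])ˣ) :
        Matrix (Fin n) (Fin n) ℚ_[l]), IsOfFinOrder x → x = 1) ∧
    (∀ h ∈ firstCongruenceKernel l n, IsNeatElem l n ι (glMapToPadic l n h)) := by
  constructor
  · exact main_aux l hl g hg
  · intro h hker
    have hh : ∀ i j, (l : ℤ_[l]) ∣
        ((h : Matrix (Fin n) (Fin n) ℤ_[l]) i j - (1 : Matrix (Fin n) (Fin n) ℤ_[l]) i j) := by
      intro i j
      have h1 : (RingHom.mapMatrix (PadicInt.toZMod (p := l)))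
          ((h : Matrix (Fin n) (Fin n) ℤ_[l])) = 1 := by
        have := hker
        rw [firstCongruenceKernel, MonoidHom.mem_ker] at this
        exact congrArg Units.val this
      have h2 : PadicInt.toZMod ((h : Matrix (Fin n) (Fin n) ℤ_[l]) i j
          - (1 : Matrix (Fin n) (Fin n) ℤ_[l]) i j) = 0 := by
        rw [map_sub]
        have h3 := congrFun (congrFun h1 i) j
        rw [RingHom.mapMatrix_apply, Matrix.map_apply] at h3
        rw [h3]
        by_cases hij : i = j <;> simp [hij, Matrix.one_apply]
      have h4 : ((h : Matrix (Fin n) (Fin n) ℤ_[l]) i j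
          - (1 : Matrix (Fin n) (Fin n) ℤ_[l]) i j) ∈ RingHom.ker (PadicInt.toZMod (p := l)) := h2
      rw [PadicInt.ker_toZMod, PadicInt.maximalIdeal_eq_span_p,
        Ideal.mem_span_singleton] at h4
      exact h4
    intro x hxfin hxmem
    have hmain := main_aux l hl h hh (Units.map ι.toMonoidHom x) hxmem
      ((Units.map ι.toMonoidHom).isOfFinOrder hxfin)
    have hinj : Function.Injective (Units.map ι.toMonoidHom) :=
      Units.map_injective (by exact ι.injective)
    apply hinj
    rw [hmain, map_one]
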